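/- Every continuous sigmoidal function with limits (0, C), C ≠ 0, is discriminatory with respect to the MPS feature class: let σ : ℝ → ℝ be continuous and bounded with σ(t) → 0 as t → −∞ and σ(t) → C as t → +∞, where C ≠ 0, and let μ be a finite signed regular Borel measure on [0,1]ⁿ. If ∫_{[0,1]ⁿ} σ(λ·p(x) + η) dμ(x) = 0 for every multilinear polynomial p on ℝⁿ and all λ, η ∈ ℝ, then μ = 0. -/

import Mathlib

open MeasureTheory

/-- A multilinear polynomial on `ℝⁿ`: `p(x) = Σ_{s ∈ {0,1}ⁿ} W_s ∏_{i : s i = 1} xᵢ`.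
These are exactly the contractions of an MPS whose site kernel maps are
`φ(xᵢ) = (xᵢ, 1)`. -/
def IsMultilinearPoly {n : ℕ} (p : (Fin n → ℝ) → ℝ) : Prop :=
  ∃ W : (Fin n → Bool) → ℝ,
    ∀ x : Fin n → ℝ,
      p x = ∑ s : Fin n → Bool, W s * ∏ i : Fin n, if s i then x i else 1

namespace MLAux

open Filter Set
open scoped NNReal ENNReal

lemma ml_continuous {n : ℕ} {p : (Fin n → ℝ) → ℝ} (hp : IsMultilinearPoly p) :
    Continuous p := by
  obtain ⟨W, hW⟩ := hp
  have h : p = fun x => ∑ s : Fin n → Bool, W s * ∏ i : Fin n, if s i then x i else 1 :=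
    funext hW
  rw [h]
  refine continuous_finset_sum _ fun s _ => continuous_const.mul ?_
  refine continuous_finset_prod _ fun i _ => ?_
  by_cases hs : s i <;> simp [hs]
  · exact continuous_apply i
  · exact continuous_const

lemma ml_const {n : ℕ} (c : ℝ) : IsMultilinearPoly (fun _ : Fin n → ℝ => c) := by
  classical
  refine ⟨fun s => if s = (fun _ => false) then c else 0, fun x => ?_⟩
  rw [Finset.sum_eq_single (fun _ => false : Fin n → Bool)]
  · simp
  · intro b _ hb; simp [hb]
  · simp

lemma ml_add {n : ℕ} {p q : (Fin n → ℝ) → ℝ} (hp : IsMultilinearPoly p)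
    (hq : IsMultilinearPoly q) : IsMultilinearPoly (fun x => p x + q x) := by
  obtain ⟨W, hW⟩ := hp
  obtain ⟨V, hV⟩ := hq
  refine ⟨fun s => W s + V s, fun x => ?_⟩
  simp [hW, hV, add_mul, Finset.sum_add_distrib]

lemma ml_neg {n : ℕ} {p : (Fin n → ℝ) → ℝ} (hp : IsMultilinearPoly p) :
    IsMultilinearPoly (fun x => -p x) := by
  obtain ⟨W, hW⟩ := hp
  refine ⟨fun s => -W s, fun x => ?_⟩
  simp [hW, Finset.sum_neg_distrib]

lemma ml_const_sub {n : ℕ} {q : (Fin n → ℝ) → ℝ} (hq : IsMultilinearPoly q) (t : ℝ) :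
    IsMultilinearPoly (fun x : Fin n → ℝ => t - q x) := by
  have := ml_add (ml_const (n := n) t) (ml_neg hq)
  simpa [sub_eq_add_neg] using this

lemma ml_coord {n : ℕ} (i : Fin n) : IsMultilinearPoly (fun x : Fin n → ℝ => x i) := by
  classical
  refine ⟨fun s => if s = (fun j => decide (j = i)) then 1 else 0, fun x => ?_⟩
  rw [Finset.sum_eq_single (fun j => decide (j = i) : Fin n → Bool)]
  · simp
  · intro b _ hb; simp [hb]
  · simp

lemma sublevel_eq {n : ℕ} (σ : ℝ → ℝ) (hσc : Continuous σ) {M : ℝ} (hM : ∀ t, |σ t| ≤ M)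
    (C : ℝ) (hC : C ≠ 0) (hbot : Tendsto σ atBot (nhds 0)) (htop : Tendsto σ atTop (nhds C))
    (ν₁ ν₂ : Measure (Fin n → ℝ)) [IsFiniteMeasure ν₁] [IsFiniteMeasure ν₂]
    (hint : ∀ p : (Fin n → ℝ) → ℝ, IsMultilinearPoly p → ∀ lam eta : ℝ,
       ∫ x, σ (lam * p x + eta) ∂ν₁ = ∫ x, σ (lam * p x + eta) ∂ν₂)
    {p : (Fin n → ℝ) → ℝ} (hp : IsMultilinearPoly p) (t : ℝ) :
    ν₁ {x | p x ≤ t} = ν₂ {x | p x ≤ t} := by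
  classical
  set q : (Fin n → ℝ) → ℝ := fun x => t - p x with hqdef
  have hq : IsMultilinearPoly q := ml_const_sub hp t
  have hqc : Continuous q := ml_continuous hq
  set A : Set (Fin n → ℝ) := {x | 0 < q x} with hAdef
  set B : Set (Fin n → ℝ) := {x | q x = 0} with hBdef
  have hA : MeasurableSet A := (isOpen_lt continuous_const hqc).measurableSet
  have hB : MeasurableSet B := (isClosed_eq hqc continuous_const).measurableSet
  -- the limit function
  have hdct : ∀ (ν : Measure (Fin n → ℝ)) [IsFiniteMeasure ν], ∀ η : ℝ,
      Tendsto (fun k : ℕ => ∫ x, σ ((k : ℝ) * q x + η) ∂ν) atTop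
        (nhds (C * (ν A).toReal + σ η * (ν B).toReal)) := by
    intro ν _ η
    set F : (Fin n → ℝ) → ℝ :=
      fun x => A.indicator (fun _ => C) x + B.indicator (fun _ => σ η) x with hFdef
    have hFint : ∫ x, F x ∂ν = C * (ν A).toReal + σ η * (ν B).toReal := by
      rw [integral_add ((integrable_indicator_iff hA).2 (integrableOn_const (measure_ne_top ν A)))
            ((integrable_indicator_iff hB).2 (integrableOn_const (measure_ne_top ν B))),
          integral_indicator_const _ hA, integral_indicator_const _ hB]
      simp [smul_eq_mul, measureReal_def]; ring
    have key : Tendsto (fun k : ℕ => ∫ x, σ ((k : ℝ) * q x + η) ∂ν) atTop (nhds (∫ x, F x ∂ν)) := by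
      apply tendsto_integral_of_dominated_convergence (fun _ => M)
      · intro k
        exact (hσc.comp ((continuous_const.mul hqc).add continuous_const)).aestronglyMeasurable
      · exact integrable_const M
      · intro k
        exact Eventually.of_forall fun x => by simpa using hM ((k : ℝ) * q x + η)
      · refine Eventually.of_forall fun x => ?_
        rcases lt_trichotomy (q x) 0 with h3 | h2 | h1
        · have harg : Tendsto (fun k : ℕ => (k : ℝ) * q x + η) atTop atBot := by
            have := (tendsto_natCast_atTop_atTop (R := ℝ)).atTop_mul_const_of_neg h3
            simpa using tendsto_atBot_add_const_right _ η this
          have : Tendsto (fun k : ℕ => σ ((k : ℝ) * q x + η)) atTop (nhds 0) :=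
            hbot.comp harg
          convert this using 2
          have hxA : x ∉ A := by simp [hAdef]; linarith
          have hxB : x ∉ B := by simp [hBdef]; exact ne_of_lt h3
          simp [hFdef, Set.indicator_of_notMem hxA, Set.indicator_of_notMem hxB]
        · have : (fun k : ℕ => σ ((k : ℝ) * q x + η)) = fun _ => σ η := by
            funext k; rw [h2]; ring_nf
          rw [this]
          have hxA : x ∉ A := by simp [hAdef, h2]
          have hxB : x ∈ B := h2
          simp only [hFdef, Set.indicator_of_notMem hxA, Set.indicator_of_mem hxB]
          simpa using tendsto_const_nhds
        · have harg : Tendsto (fun k : ℕ => (k : ℝ) * q x + η) atTop atTop := by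
            have := (tendsto_natCast_atTop_atTop (R := ℝ)).atTop_mul_const h1
            simpa using tendsto_atTop_add_const_right _ η this
          have : Tendsto (fun k : ℕ => σ ((k : ℝ) * q x + η)) atTop (nhds C) :=
            htop.comp harg
          convert this using 2
          have hxA : x ∈ A := h1
          have hxB : x ∉ B := by simp [hBdef]; exact ne_of_gt h1
          simp [hFdef, Set.indicator_of_mem hxA, Set.indicator_of_notMem hxB]
    rwa [hFint] at key
  -- evaluate the limit equation for every η
  have heq : ∀ η : ℝ,
      C * (ν₁ A).toReal + σ η * (ν₁ B).toReal
        = C * (ν₂ A).toReal + σ η * (ν₂ B).toReal := by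
    intro η
    have h1 := hdct ν₁ η
    have h2 := hdct ν₂ η
    have hseq : (fun k : ℕ => ∫ x, σ ((k : ℝ) * q x + η) ∂ν₁)
        = fun k : ℕ => ∫ x, σ ((k : ℝ) * q x + η) ∂ν₂ := by
      funext k; exact hint q hq (k : ℝ) η
    rw [hseq] at h1
    exact tendsto_nhds_unique h1 h2
  -- let η → -∞ : equality of A-measures
  have hAeq : (ν₁ A).toReal = (ν₂ A).toReal := by
    have l1 : Tendsto (fun η => C * (ν₁ A).toReal + σ η * (ν₁ B).toReal) atBot
        (nhds (C * (ν₁ A).toReal + 0 * (ν₁ B).toReal)) :=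
      tendsto_const_nhds.add (hbot.mul_const _)
    have l2 : Tendsto (fun η => C * (ν₂ A).toReal + σ η * (ν₂ B).toReal) atBot
        (nhds (C * (ν₂ A).toReal + 0 * (ν₂ B).toReal)) :=
      tendsto_const_nhds.add (hbot.mul_const _)
    rw [funext heq] at l1
    have := tendsto_nhds_unique l1 l2
    simp only [zero_mul, add_zero] at this
    exact mul_left_cancel₀ hC this
  have hBeq : (ν₁ B).toReal = (ν₂ B).toReal := by
    have l1 : Tendsto (fun η => C * (ν₁ A).toReal + σ η * (ν₁ B).toReal) atTop
        (nhds (C * (ν₁ A).toReal + C * (ν₁ B).toReal)) :=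
      tendsto_const_nhds.add (htop.mul_const _)
    have l2 : Tendsto (fun η => C * (ν₂ A).toReal + σ η * (ν₂ B).toReal) atTop
        (nhds (C * (ν₂ A).toReal + C * (ν₂ B).toReal)) :=
      tendsto_const_nhds.add (htop.mul_const _)
    rw [funext heq] at l1
    have h := tendsto_nhds_unique l1 l2
    rw [hAeq] at h
    have := add_left_cancel h
    exact mul_left_cancel₀ hC this
  have hAm : ν₁ A = ν₂ A :=
    (ENNReal.toReal_eq_toReal_iff' (measure_ne_top ν₁ A) (measure_ne_top ν₂ A)).1 hAeq
  have hBm : ν₁ B = ν₂ B :=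
    (ENNReal.toReal_eq_toReal_iff' (measure_ne_top ν₁ B) (measure_ne_top ν₂ B)).1 hBeq
  have hset : {x | p x ≤ t} = A ∪ B := by
    ext x
    simp only [hAdef, hBdef, hqdef, Set.mem_setOf_eq, Set.mem_union, sub_pos, sub_eq_zero]
    constructor
    · intro h
      rcases lt_or_eq_of_le h with h | h
      · exact Or.inl h
      · exact Or.inr h.symm
    · rintro (h | h)
      · exact le_of_lt h
      · exact le_of_eq h.symm
  have hdisj : Disjoint A B := by
    rw [Set.disjoint_left]
    intro x hxA hxB
    exact absurd (hxB : q x = 0) (ne_of_gt (hxA : 0 < q x))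
  rw [hset, measure_union hdisj hB, measure_union hdisj hB, hAm, hBm]

lemma measures_eq {n : ℕ} (ν₁ ν₂ : Measure (Fin n → ℝ)) [IsFiniteMeasure ν₁] [IsFiniteMeasure ν₂]
    (hs₁ : ∀ᵐ x ∂ν₁, x ∈ Set.Icc (0 : Fin n → ℝ) 1)
    (hs₂ : ∀ᵐ x ∂ν₂, x ∈ Set.Icc (0 : Fin n → ℝ) 1)
    (hsub : ∀ q : (Fin n → ℝ) → ℝ, IsMultilinearPoly q → ∀ t : ℝ,
      ν₁ {x | q x ≤ t} = ν₂ {x | q x ≤ t}) :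
    ν₁ = ν₂ := by
  classical
  set K : Set (Fin n → ℝ) := Set.Icc 0 1 with hKdef
  have hKc : IsCompact K := isCompact_Icc
  have hKm : MeasurableSet K := measurableSet_Icc
  -- integrability of continuous functions
  have hrest₁ : ν₁.restrict K = ν₁ := Measure.restrict_eq_self_of_ae_mem hs₁
  have hrest₂ : ν₂.restrict K = ν₂ := Measure.restrict_eq_self_of_ae_mem hs₂
  have hinteg : ∀ (ν : Measure (Fin n → ℝ)) [IsFiniteMeasure ν], ν.restrict K = ν →
      ∀ G : (Fin n → ℝ) → ℝ, Continuous G → Integrable G ν := by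
    intro ν _ hrest G hG
    rw [← hrest]
    exact ContinuousOn.integrableOn_compact hKc hG.continuousOn
  -- pushforwards agree
  have push : ∀ q : (Fin n → ℝ) → ℝ, IsMultilinearPoly q →
      Measure.map q ν₁ = Measure.map q ν₂ := by
    intro q hq
    have hqm : Measurable q := (ml_continuous hq).measurable
    haveI : IsFiniteMeasure (Measure.map q ν₁) := by
      constructor; rw [Measure.map_apply hqm MeasurableSet.univ]; exact measure_lt_top _ _
    refine Measure.ext_of_Iic _ _ fun t => ?_
    rw [Measure.map_apply hqm measurableSet_Iic, Measure.map_apply hqm measurableSet_Iic]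
    exact hsub q hq t
  -- equal integrals of exp ∘ q
  have expint : ∀ q : (Fin n → ℝ) → ℝ, IsMultilinearPoly q →
      ∫ x, Real.exp (q x) ∂ν₁ = ∫ x, Real.exp (q x) ∂ν₂ := by
    intro q hq
    have hqm : Measurable q := (ml_continuous hq).measurable
    rw [← integral_map hqm.aemeasurable Real.continuous_exp.aestronglyMeasurable,
        ← integral_map hqm.aemeasurable Real.continuous_exp.aestronglyMeasurable, push q hq]
  -- Stone-Weierstrass setup on the compact cube
  haveI : CompactSpace K := isCompact_iff_compactSpace.mp hKc
  set S : Set C(K, ℝ) :=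
    {f | ∃ q : (Fin n → ℝ) → ℝ, IsMultilinearPoly q ∧ ∀ x : K, f x = Real.exp (q x)} with hSdef
  set A : Subalgebra ℝ C(K, ℝ) := Algebra.adjoin ℝ S with hAdef
  -- S is a submonoid
  set SM : Submonoid C(K, ℝ) :=
    { carrier := S
      one_mem' := ⟨fun _ => 0, ml_const 0, fun x => by simp⟩
      mul_mem' := by
        rintro f g ⟨q₁, hq₁, hf⟩ ⟨q₂, hq₂, hg⟩
        exact ⟨fun x => q₁ x + q₂ x, ml_add hq₁ hq₂, fun x => by
          simp [hf x, hg x, Real.exp_add]⟩ } with hSMdef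
  have hAspan : (A : Set C(K, ℝ)) ⊆ (Submodule.span ℝ S : Set C(K, ℝ)) := by
    intro f hf
    have h1 : f ∈ Subalgebra.toSubmodule A := hf
    rw [hAdef, Algebra.adjoin_eq_span] at h1
    have h2 : (Submonoid.closure S : Set C(K, ℝ)) ⊆ S := by
      have : Submonoid.closure S ≤ SM := Submonoid.closure_le.2 (subset_refl S)
      exact this
    exact Submodule.span_mono h2 h1
  -- everything in the span has a continuous extension with equal integrals
  have hspanT : ∀ f : C(K, ℝ), f ∈ Submodule.span ℝ S →
      ∃ G : (Fin n → ℝ) → ℝ, Continuous G ∧ (∀ x : K, G x = f x) ∧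
        ∫ x, G x ∂ν₁ = ∫ x, G x ∂ν₂ := by
    intro f hf
    induction hf using Submodule.span_induction with
    | mem f hfS =>
      obtain ⟨q, hq, hfq⟩ := hfS
      exact ⟨fun x => Real.exp (q x), Real.continuous_exp.comp (ml_continuous hq),
        fun x => (hfq x).symm, expint q hq⟩
    | zero => exact ⟨fun _ => 0, continuous_const, fun x => by simp, by simp⟩
    | add f g _ _ hf' hg' =>
      obtain ⟨G₁, hG₁c, hG₁e, hG₁i⟩ := hf'
      obtain ⟨G₂, hG₂c, hG₂e, hG₂i⟩ := hg'
      refine ⟨fun x => G₁ x + G₂ x, hG₁c.add hG₂c, fun x => by simp [hG₁e x, hG₂e x], ?_⟩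
      rw [integral_add (hinteg ν₁ hrest₁ _ hG₁c) (hinteg ν₁ hrest₁ _ hG₂c),
          integral_add (hinteg ν₂ hrest₂ _ hG₁c) (hinteg ν₂ hrest₂ _ hG₂c), hG₁i, hG₂i]
    | smul c f _ hf' =>
      obtain ⟨G, hGc, hGe, hGi⟩ := hf'
      refine ⟨fun x => c * G x, continuous_const.mul hGc, fun x => by simp [hGe x], ?_⟩
      rw [integral_const_mul, integral_const_mul, hGi]
  -- A separates points
  have hsep : A.SeparatesPoints := by
    intro x y hxy
    have hxy' : (x : Fin n → ℝ) ≠ (y : Fin n → ℝ) := fun h => hxy (Subtype.ext h)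
    obtain ⟨i, hi⟩ : ∃ i, (x : Fin n → ℝ) i ≠ (y : Fin n → ℝ) i := by
      by_contra h
      push_neg at h
      exact hxy' (funext h)
    set f : C(K, ℝ) := ⟨fun z => Real.exp ((z : Fin n → ℝ) i),
      Real.continuous_exp.comp ((continuous_apply i).comp continuous_subtype_val)⟩ with hfdef
    have hfS : f ∈ S := ⟨fun z => z i, ml_coord i, fun z => rfl⟩
    refine ⟨f, ⟨f, Algebra.subset_adjoin hfS, rfl⟩, ?_⟩
    simp only [hfdef, ContinuousMap.coe_mk]
    exact fun h => hi (Real.exp_injective h)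
  -- equal integrals of all continuous functions
  have contint : ∀ G : (Fin n → ℝ) → ℝ, Continuous G →
      ∫ x, G x ∂ν₁ = ∫ x, G x ∂ν₂ := by
    intro G hG
    set D : ℝ := ∫ x, G x ∂ν₁ - ∫ x, G x ∂ν₂ with hDdef
    have hc : (0:ℝ) < (ν₁ Set.univ).toReal + (ν₂ Set.univ).toReal + 1 := by positivity
    set c : ℝ := (ν₁ Set.univ).toReal + (ν₂ Set.univ).toReal + 1 with hcdef
    have hDle : ∀ ε : ℝ, 0 < ε → |D| ≤ ε := by
      intro ε hε
      obtain ⟨g, hgnear⟩ := ContinuousMap.exists_mem_subalgebra_near_continuous_of_separatesPoints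
        A hsep (fun z : K => G z) (hG.comp continuous_subtype_val) (ε / c) (by positivity)
      obtain ⟨G', hG'c, hG'e, hG'i⟩ := hspanT g (hAspan g.2)
      have hbound : ∀ (ν : Measure (Fin n → ℝ)) [IsFiniteMeasure ν],
          (∀ᵐ x ∂ν, x ∈ K) → |∫ x, (G x - G' x) ∂ν| ≤ (ε / c) * (ν Set.univ).toReal := by
        intro ν inst hae
        haveI := inst
        rw [← Real.norm_eq_abs]
        refine norm_integral_le_of_norm_le_const ?_
        filter_upwards [hae] with x hx
        have := hgnear ⟨x, hx⟩
        have he : G' x = (g : C(K, ℝ)) ⟨x, hx⟩ := hG'e ⟨x, hx⟩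
        rw [Real.norm_eq_abs]
        have : |(g : C(K, ℝ)) ⟨x, hx⟩ - G x| < ε / c := by
          simpa [Real.norm_eq_abs] using this
        rw [he, abs_sub_comm]
        exact le_of_lt this
      have hD2 : D = ∫ x, (G x - G' x) ∂ν₁ - ∫ x, (G x - G' x) ∂ν₂ := by
        rw [integral_sub (hinteg ν₁ hrest₁ _ hG) (hinteg ν₁ hrest₁ _ hG'c),
            integral_sub (hinteg ν₂ hrest₂ _ hG) (hinteg ν₂ hrest₂ _ hG'c), hDdef, hG'i]
        ring
      have h1 := hbound ν₁ hs₁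
      have h2 := hbound ν₂ hs₂
      have habs : |D| ≤ (ε / c) * (ν₁ Set.univ).toReal + (ε / c) * (ν₂ Set.univ).toReal := by
        rw [hD2]
        exact (abs_sub _ _).trans (add_le_add h1 h2)
      have : (ε / c) * (ν₁ Set.univ).toReal + (ε / c) * (ν₂ Set.univ).toReal ≤ ε := by
        rw [← mul_add]
        have h3 : (ν₁ Set.univ).toReal + (ν₂ Set.univ).toReal ≤ c := by
          rw [hcdef]; linarith
        calc (ε / c) * ((ν₁ Set.univ).toReal + (ν₂ Set.univ).toReal)
            ≤ (ε / c) * c := by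
              apply mul_le_mul_of_nonneg_left h3 (by positivity)
          _ = ε := by field_simp
      exact habs.trans this
    have h0 : |D| ≤ 0 := by
      by_contra h
      push_neg at h
      have := hDle (|D| / 2) (by linarith)
      linarith
    have hD0 : D = 0 := abs_nonpos_iff.mp h0
    rw [hDdef] at hD0
    linarith
  -- conclude using bounded continuous functions
  apply ext_of_forall_lintegral_eq_of_IsFiniteMeasure
  intro f
  have hfc : Continuous (fun x : Fin n → ℝ => ((f x : ℝ≥0) : ℝ)) :=
    NNReal.continuous_coe.comp f.continuous
  rw [lintegral_coe_eq_integral _ (hinteg ν₁ hrest₁ _ hfc),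
      lintegral_coe_eq_integral _ (hinteg ν₂ hrest₂ _ hfc), contint _ hfc]

end MLAux

/-- every continuous bounded sigmoidal `σ` with `σ → 0` at `-∞` and
`σ → C ≠ 0` at `+∞` is discriminatory for the MPS feature class: if a finite signed
regular Borel measure `μ` on `[0,1]ⁿ` (realized as a signed measure on `ℝⁿ` vanishing
outside the cube, with regular Jordan parts) satisfies
`∫ σ(λ p(x) + η) dμ(x) = 0` for all multilinear polynomials `p` and all `λ, η ∈ ℝ`,
then `μ = 0`. -/
theorem continuous_sigmoidal_discriminatory (n : ℕ) (σ : ℝ → ℝ)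
    (hσc : Continuous σ) (hσb : ∃ M, ∀ t, |σ t| ≤ M) (C : ℝ) (hC : C ≠ 0)
    (hbot : Filter.Tendsto σ Filter.atBot (nhds 0))
    (htop : Filter.Tendsto σ Filter.atTop (nhds C))
    (μ : SignedMeasure (Fin n → ℝ))
    (hsupp : ∀ A : Set (Fin n → ℝ), MeasurableSet A →
      A ⊆ (Set.Icc (0 : Fin n → ℝ) 1)ᶜ → μ A = 0)
    (hreg₁ : μ.toJordanDecomposition.posPart.Regular)
    (hreg₂ : μ.toJordanDecomposition.negPart.Regular)
    (hint : ∀ p : (Fin n → ℝ) → ℝ, IsMultilinearPoly p → ∀ lam eta : ℝ,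
      (∫ x in Set.Icc (0 : Fin n → ℝ) 1, σ (lam * p x + eta)
          ∂μ.toJordanDecomposition.posPart)
        - (∫ x in Set.Icc (0 : Fin n → ℝ) 1, σ (lam * p x + eta)
          ∂μ.toJordanDecomposition.negPart) = 0) :
    μ = 0 := by
  classical
  obtain ⟨M, hM⟩ := hσb
  set K : Set (Fin n → ℝ) := Set.Icc 0 1 with hKdef
  have hKm : MeasurableSet K := measurableSet_Icc
  set ν₁ : Measure (Fin n → ℝ) := μ.toJordanDecomposition.posPart.restrict K with hν₁
  set ν₂ : Measure (Fin n → ℝ) := μ.toJordanDecomposition.negPart.restrict K with hν₂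
  haveI : IsFiniteMeasure ν₁ := by rw [hν₁]; infer_instance
  haveI : IsFiniteMeasure ν₂ := by rw [hν₂]; infer_instance
  have hint' : ∀ p : (Fin n → ℝ) → ℝ, IsMultilinearPoly p → ∀ lam eta : ℝ,
      ∫ x, σ (lam * p x + eta) ∂ν₁ = ∫ x, σ (lam * p x + eta) ∂ν₂ := by
    intro p hp lam eta
    exact sub_eq_zero.mp (hint p hp lam eta)
  have hsub : ∀ q : (Fin n → ℝ) → ℝ, IsMultilinearPoly q → ∀ t : ℝ,
      ν₁ {x | q x ≤ t} = ν₂ {x | q x ≤ t} :=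
    fun q hq t => MLAux.sublevel_eq σ hσc hM C hC hbot htop ν₁ ν₂ hint' hq t
  have hs₁ : ∀ᵐ x ∂ν₁, x ∈ K := ae_restrict_mem hKm
  have hs₂ : ∀ᵐ x ∂ν₂, x ∈ K := ae_restrict_mem hKm
  have hνeq : ν₁ = ν₂ := MLAux.measures_eq ν₁ ν₂ hs₁ hs₂ hsub
  -- now conclude μ = 0
  refine MeasureTheory.VectorMeasure.ext fun A hA => ?_
  have hAsplit : A = (A ∩ K) ∪ (A \ K) := (Set.inter_union_diff A K).symm
  have hdisj : Disjoint (A ∩ K) (A \ K) := by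
    rw [Set.disjoint_left]; rintro x ⟨-, hxK⟩ hx; exact hx.2 hxK
  rw [hAsplit, MeasureTheory.VectorMeasure.of_union hdisj (hA.inter hKm) (hA.diff hKm)]
  have h2 : μ (A \ K) = 0 := hsupp _ (hA.diff hKm) fun x hx => hx.2
  have h1 : μ (A ∩ K) = 0 := by
    have hm : MeasurableSet (A ∩ K) := hA.inter hKm
    have happ : μ (A ∩ K) = (μ.toJordanDecomposition.posPart (A ∩ K)).toReal
        - (μ.toJordanDecomposition.negPart (A ∩ K)).toReal := by
      conv_lhs => rw [← MeasureTheory.SignedMeasure.toSignedMeasure_toJordanDecomposition μ]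
      rw [MeasureTheory.JordanDecomposition.toSignedMeasure,
        MeasureTheory.VectorMeasure.sub_apply,
        MeasureTheory.Measure.toSignedMeasure_apply_measurable hm,
        MeasureTheory.Measure.toSignedMeasure_apply_measurable hm]
      rfl
    have hpos : μ.toJordanDecomposition.posPart (A ∩ K) = ν₁ (A ∩ K) := by
      rw [hν₁, MeasureTheory.Measure.restrict_apply hm, Set.inter_assoc, Set.inter_self]
    have hneg : μ.toJordanDecomposition.negPart (A ∩ K) = ν₂ (A ∩ K) := by
      rw [hν₂, MeasureTheory.Measure.restrict_apply hm, Set.inter_assoc, Set.inter_self]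
    rw [happ, hpos, hneg, hνeq, sub_self]
  rw [h1, h2, add_zero]
  rfl
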